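/- arXiv:1001.1113 — 5 statements merged into one kernel-verified Lean document; each statement's English description precedes it below -/
import Mathlib

section
/- The permutations r = (1 2 3 4 5 6 7 8 9 10 11) and s = (1 2 3 4 5 6 7 8 9 11 10) in S₁₁ are not conjugate in the subgroup ⟨r, s⟩ that they generate. -/
open Equiv Equiv.Perm

private lemma aux_not_conj (r s σ : Equiv.Perm (Fin 11))
    (hsr : Equiv.Perm.sign r = 1) (hss : Equiv.Perm.sign s = 1)
    (hσconj : σ * r * σ⁻¹ = s) (hσsign : Equiv.Perm.sign σ = -1)
    (hcyc : r.IsCycle) (hfull : ∀ x, r x ≠ x) :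
    ¬ ∃ c ∈ Subgroup.closure ({r, s} : Set (Equiv.Perm (Fin 11))),
        c * r * c⁻¹ = s := by
  have key : ∀ c ∈ Subgroup.closure ({r, s} : Set (Equiv.Perm (Fin 11))),
      Equiv.Perm.sign c = 1 := by
    intro c hc
    induction hc using Subgroup.closure_induction with
    | mem x hx => rcases hx with h | h <;> subst h <;> assumption
    | one => simp
    | mul x y _ _ hx hy => simp [hx, hy]
    | inv x _ hx => simp [hx]
  rintro ⟨c, hc, hconj⟩
  have hsignc := key c hc
  set d : Equiv.Perm (Fin 11) := σ⁻¹ * c with hd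
  have hcomm : Commute d r := by
    have h1 : d * r * d⁻¹ = r :=
      calc σ⁻¹ * c * r * (σ⁻¹ * c)⁻¹ = σ⁻¹ * (c * r * c⁻¹) * σ := by group
        _ = σ⁻¹ * (σ * r * σ⁻¹) * σ := by rw [hconj, hσconj]
        _ = r := by group
    exact mul_inv_eq_iff_eq_mul.mp h1
  obtain ⟨hc', hmem⟩ := hcyc.commute_iff.mp hcomm
  have hdeq : Equiv.Perm.ofSubtype (d.subtypePerm hc') = d := by
    apply Equiv.ext
    intro x
    exact ofSubtype_subtypePerm_of_mem hc' (Equiv.Perm.mem_support.mpr (hfull x))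
  rw [hdeq] at hmem
  obtain ⟨k, hk⟩ := hmem
  have hds : Equiv.Perm.sign d = 1 := by rw [← hk, map_zpow, hsr, one_zpow]
  rw [hd, map_mul, map_inv, hσsign, hsignc] at hds
  simp at hds

theorem eleven_cycles_not_conj_in_closure :
    let r : Equiv.Perm (Fin 11) :=
      ([0, 1, 2, 3, 4, 5, 6, 7, 8, 9, 10] : List (Fin 11)).formPerm
    let s : Equiv.Perm (Fin 11) :=
      ([0, 1, 2, 3, 4, 5, 6, 7, 8, 10, 9] : List (Fin 11)).formPerm
    ¬ ∃ c ∈ Subgroup.closure ({r, s} : Set (Equiv.Perm (Fin 11))),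
        c * r * c⁻¹ = s := by
  intro r s
  exact aux_not_conj r s (Equiv.swap 9 10)
    (by decide) (by decide) (by decide)
    (Equiv.Perm.sign_swap (by decide))
    (List.isCycle_formPerm (by decide) (by decide))
    (by decide)
end

section
/- The two 11-cycles r = (1 2 3 4 5 6 7 8 9 10 11) and s = (1 2 3 4 5 6 7 8 9 11 10) generate the alternating group A₁₁. -/
set_option maxRecDepth 10000

open Equiv Equiv.Perm Subgroup

namespace Eleven

variable {α : Type*} [DecidableEq α]

/-- The 3-cycle sending `a → b → c → a`. -/
def c3 (a b c : α) : Equiv.Perm α := Equiv.swap a b * Equiv.swap b c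

lemma c3_a {a b c : α} (hab : a ≠ b) (hac : a ≠ c) : c3 a b c a = b := by
  rw [c3, Equiv.Perm.mul_apply, Equiv.swap_apply_of_ne_of_ne hab hac, Equiv.swap_apply_left]

lemma c3_b {a b c : α} (hca : c ≠ a) (hcb : c ≠ b) : c3 a b c b = c := by
  rw [c3, Equiv.Perm.mul_apply, Equiv.swap_apply_left,
    Equiv.swap_apply_of_ne_of_ne hca hcb]

lemma c3_c (a b c : α) : c3 a b c c = a := by
  rw [c3, Equiv.Perm.mul_apply, Equiv.swap_apply_right, Equiv.swap_apply_right]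

lemma c3_other {a b c y : α} (ha : y ≠ a) (hb : y ≠ b) (hc : y ≠ c) : c3 a b c y = y := by
  rw [c3, Equiv.Perm.mul_apply, Equiv.swap_apply_of_ne_of_ne hb hc,
    Equiv.swap_apply_of_ne_of_ne ha hb]

lemma c3_rot {a b c : α} (hab : a ≠ b) (hbc : b ≠ c) (hac : a ≠ c) :
    c3 a b c = c3 b c a := by
  ext x
  rcases eq_or_ne x a with rfl | hxa
  · rw [c3_a hab hac, c3_c]
  rcases eq_or_ne x b with rfl | hxb
  · rw [c3_b hac.symm hbc.symm, c3_a hbc hab.symm]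
  rcases eq_or_ne x c with rfl | hxc
  · rw [c3_c, c3_b hab hac]
  · rw [c3_other hxa hxb hxc, c3_other hxb hxc hxa]

lemma c3_inv {a b c : α} (hab : a ≠ b) (hbc : b ≠ c) (hac : a ≠ c) :
    (c3 a b c)⁻¹ = c3 a c b := by
  apply inv_eq_of_mul_eq_one_right
  ext x
  rcases eq_or_ne x a with rfl | hxa
  · rw [Equiv.Perm.mul_apply, c3_a hac hab, c3_c, Equiv.Perm.one_apply]
  rcases eq_or_ne x b with rfl | hxb
  · rw [Equiv.Perm.mul_apply, c3_c, c3_a hab hac, Equiv.Perm.one_apply]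
  rcases eq_or_ne x c with rfl | hxc
  · rw [Equiv.Perm.mul_apply, c3_b hab.symm hbc, c3_b hac.symm hbc.symm, Equiv.Perm.one_apply]
  · rw [Equiv.Perm.mul_apply, c3_other hxa hxc hxb, c3_other hxa hxb hxc,
      Equiv.Perm.one_apply]

lemma c3_conj (g : Equiv.Perm α) (a b c : α) :
    g * c3 a b c * g⁻¹ = c3 (g a) (g b) (g c) := by
  rw [c3, c3, Equiv.swap_apply_apply, Equiv.swap_apply_apply]
  group

theorem c3_mem {H : Subgroup (Equiv.Perm α)} {u v : α} (huv : u ≠ v)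
    (hgen : ∀ k, k ≠ u → k ≠ v → c3 u v k ∈ H) :
    ∀ a b c, a ≠ b → b ≠ c → a ≠ c → c3 a b c ∈ H := by
  have h1 : ∀ k, k ≠ u → k ≠ v → c3 u k v ∈ H := by
    intro k hku hkv
    have h := inv_mem (hgen k hku hkv)
    rwa [c3_inv huv hkv.symm hku.symm] at h
  have h2 : ∀ b c, b ≠ u → b ≠ v → c ≠ u → c ≠ v → b ≠ c → c3 u b c ∈ H := by
    intro b c hbu hbv hcu hcv hbc
    have hh := h1 c hcu hcv
    have h := mul_mem (mul_mem hh (hgen b hbu hbv)) (inv_mem hh)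
    rw [c3_conj, c3_a hcu.symm huv, c3_c, c3_other hbu hbc hbv,
      c3_rot hcu (Ne.symm hbu) (Ne.symm hbc)] at h
    exact h
  have h3 : ∀ b c, b ≠ u → b ≠ v → c ≠ u → c ≠ v → b ≠ c → c3 v b c ∈ H := by
    intro b c hbu hbv hcu hcv hbc
    have hh := hgen b hbu hbv
    have h := mul_mem (mul_mem hh (hgen c hcu hcv)) (inv_mem hh)
    rw [c3_conj, c3_a huv hbu.symm, c3_b hbu hbv, c3_other hcu hcv (Ne.symm hbc)] at h
    exact h
  have h4 : ∀ a b c, a ≠ u → a ≠ v → b ≠ u → b ≠ v → c ≠ u → c ≠ v →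
      a ≠ b → b ≠ c → a ≠ c → c3 a b c ∈ H := by
    intro a b c hau hav hbu hbv hcu hcv hab hbc hac
    have hh := h1 a hau hav
    have h := mul_mem (mul_mem hh (h2 b c hbu hbv hcu hcv hbc)) (inv_mem hh)
    rw [c3_conj, c3_a hau.symm huv, c3_other hbu (Ne.symm hab) hbv,
      c3_other hcu (Ne.symm hac) hcv] at h
    exact h
  have m0 : ∀ b c, b ≠ c → u ≠ b → u ≠ c → c3 u b c ∈ H := by
    intro b c hbc hub huc
    rcases eq_or_ne b v with rfl | hbv
    · exact hgen c huc.symm hbc.symm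
    rcases eq_or_ne c v with rfl | hcv
    · exact h1 b hub.symm hbv
    · exact h2 b c hub.symm hbv huc.symm hcv hbc
  intro a b c hab hbc hac
  rcases eq_or_ne a u with rfl | hau
  · exact m0 b c hbc hab hac
  rcases eq_or_ne b u with rfl | hbu
  · rw [c3_rot hab hbc hac]
    exact m0 c a hac.symm hbc hab.symm
  rcases eq_or_ne c u with rfl | hcu
  · rw [c3_rot hab hbc hac, c3_rot hbc hac.symm hab.symm]
    exact m0 a b hab hac.symm hbc.symm
  rcases eq_or_ne a v with rfl | hav
  · exact h3 b c hbu hab.symm hcu hac.symm hbc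
  rcases eq_or_ne b v with rfl | hbv
  · rw [c3_rot hab hbc hac]
    exact h3 c a hcu hbc.symm hau hab hac.symm
  rcases eq_or_ne c v with rfl | hcv
  · rw [c3_rot hab hbc hac, c3_rot hbc hac.symm hab.symm]
    exact h3 a b hau hac hbu hbc hab
  · exact h4 a b c hau hav hbu hbv hcu hcv hab hbc hac

theorem exists_c3 [Fintype α] {σ : Equiv.Perm α} (h : σ.IsThreeCycle) :
    ∃ a b c, a ≠ b ∧ b ≠ c ∧ a ≠ c ∧ σ = c3 a b c := by
  have hcard := h.card_support
  obtain ⟨x, hx⟩ : σ.support.Nonempty := Finset.card_pos.mp (by rw [hcard]; norm_num)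
  have hx1 : σ x ≠ x := Equiv.Perm.mem_support.mp hx
  have hx2 : σ (σ x) ≠ σ x := Equiv.Perm.mem_support.mp (Equiv.Perm.apply_mem_support.mpr hx)
  have hord : σ ^ 3 = 1 := by rw [← h.orderOf]; exact pow_orderOf_eq_one σ
  have hcube : ∀ y, σ (σ (σ y)) = y := by
    intro y
    have : (σ ^ 3) y = y := by rw [hord]; rfl
    simpa [pow_succ, Equiv.Perm.mul_apply] using this
  have hx3 : σ (σ x) ≠ x := by
    intro hxx
    apply hx1
    have := hcube x
    rw [hxx] at this
    exact this
  refine ⟨x, σ x, σ (σ x), hx1.symm, hx2.symm, hx3.symm, ?_⟩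
  have hsub : ({x, σ x, σ (σ x)} : Finset α) ⊆ σ.support := by
    intro y hy
    simp only [Finset.mem_insert, Finset.mem_singleton] at hy
    rcases hy with rfl | rfl | rfl
    · exact hx
    · exact Equiv.Perm.apply_mem_support.mpr hx
    · exact Equiv.Perm.apply_mem_support.mpr (Equiv.Perm.apply_mem_support.mpr hx)
  have hsupp : σ.support = {x, σ x, σ (σ x)} := by
    refine (Finset.eq_of_subset_of_card_le hsub ?_).symm
    rw [hcard]
    rw [Finset.card_insert_of_notMem (by simp [Ne.symm hx1, Ne.symm hx3]),
      Finset.card_insert_of_notMem (by simp [Ne.symm hx2]), Finset.card_singleton]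
  ext y
  by_cases hy : y ∈ σ.support
  · rw [hsupp] at hy
    simp only [Finset.mem_insert, Finset.mem_singleton] at hy
    rcases hy with rfl | rfl | rfl
    · rw [c3_a hx1.symm hx3.symm]
    · rw [c3_b hx3 hx2]
    · rw [c3_c, hcube]
  · have h0 : σ y = y := Equiv.Perm.notMem_support.mp hy
    rw [hsupp] at hy
    simp only [Finset.mem_insert, Finset.mem_singleton, not_or] at hy
    rw [h0, c3_other hy.1 hy.2.1 hy.2.2]

def rr : Equiv.Perm (Fin 11) := ([0, 1, 2, 3, 4, 5, 6, 7, 8, 9, 10] : List (Fin 11)).formPerm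

def ss : Equiv.Perm (Fin 11) := ([0, 1, 2, 3, 4, 5, 6, 7, 8, 10, 9] : List (Fin 11)).formPerm

theorem aux : Subgroup.closure ({rr, ss} : Set (Equiv.Perm (Fin 11)))
    = alternatingGroup (Fin 11) := by
  set H := Subgroup.closure ({rr, ss} : Set (Equiv.Perm (Fin 11))) with hHdef
  have hr : rr ∈ H := subset_closure (Set.mem_insert _ _)
  have hs : ss ∈ H := subset_closure (Set.mem_insert_of_mem _ rfl)
  have hstep : ∀ d : Equiv.Perm (Fin 11), d ∈ H → rr * d * rr⁻¹ ∈ H := fun d hd =>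
    mul_mem (mul_mem hr hd) (inv_mem hr)
  have a8 : c3 (8 : Fin 11) 9 10 ∈ H := by
    have h := inv_mem (mul_mem (inv_mem hs) hr)
    rwa [show (ss⁻¹ * rr)⁻¹ = c3 (8 : Fin 11) 9 10 from by decide] at h
  have a9 : c3 (9 : Fin 11) 10 0 ∈ H := by
    have h := hstep _ a8
    rwa [show rr * c3 (8 : Fin 11) 9 10 * rr⁻¹ = c3 (9 : Fin 11) 10 0 from by decide] at h
  have a10 : c3 (10 : Fin 11) 0 1 ∈ H := by
    have h := hstep _ a9
    rwa [show rr * c3 (9 : Fin 11) 10 0 * rr⁻¹ = c3 (10 : Fin 11) 0 1 from by decide] at h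
  have a0 : c3 (0 : Fin 11) 1 2 ∈ H := by
    have h := hstep _ a10
    rwa [show rr * c3 (10 : Fin 11) 0 1 * rr⁻¹ = c3 (0 : Fin 11) 1 2 from by decide] at h
  have a1 : c3 (1 : Fin 11) 2 3 ∈ H := by
    have h := hstep _ a0
    rwa [show rr * c3 (0 : Fin 11) 1 2 * rr⁻¹ = c3 (1 : Fin 11) 2 3 from by decide] at h
  have a2 : c3 (2 : Fin 11) 3 4 ∈ H := by
    have h := hstep _ a1
    rwa [show rr * c3 (1 : Fin 11) 2 3 * rr⁻¹ = c3 (2 : Fin 11) 3 4 from by decide] at h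
  have a3 : c3 (3 : Fin 11) 4 5 ∈ H := by
    have h := hstep _ a2
    rwa [show rr * c3 (2 : Fin 11) 3 4 * rr⁻¹ = c3 (3 : Fin 11) 4 5 from by decide] at h
  have a4 : c3 (4 : Fin 11) 5 6 ∈ H := by
    have h := hstep _ a3
    rwa [show rr * c3 (3 : Fin 11) 4 5 * rr⁻¹ = c3 (4 : Fin 11) 5 6 from by decide] at h
  have a5 : c3 (5 : Fin 11) 6 7 ∈ H := by
    have h := hstep _ a4
    rwa [show rr * c3 (4 : Fin 11) 5 6 * rr⁻¹ = c3 (5 : Fin 11) 6 7 from by decide] at h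
  have a6 : c3 (6 : Fin 11) 7 8 ∈ H := by
    have h := hstep _ a5
    rwa [show rr * c3 (5 : Fin 11) 6 7 * rr⁻¹ = c3 (6 : Fin 11) 7 8 from by decide] at h
  have a7 : c3 (7 : Fin 11) 8 9 ∈ H := by
    have h := hstep _ a6
    rwa [show rr * c3 (6 : Fin 11) 7 8 * rr⁻¹ = c3 (7 : Fin 11) 8 9 from by decide] at h
  have m2 : c3 (0 : Fin 11) 1 2 ∈ H := a0
  have m3 : c3 (0 : Fin 11) 1 3 ∈ H := by
    have h := mul_mem (mul_mem a2 m2) (inv_mem a2)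
    rwa [show c3 (2 : Fin 11) 3 4 * c3 (0 : Fin 11) 1 2 * (c3 (2 : Fin 11) 3 4)⁻¹ = c3 (0 : Fin 11) 1 3 from by decide] at h
  have m4 : c3 (0 : Fin 11) 1 4 ∈ H := by
    have h := mul_mem (mul_mem a3 m3) (inv_mem a3)
    rwa [show c3 (3 : Fin 11) 4 5 * c3 (0 : Fin 11) 1 3 * (c3 (3 : Fin 11) 4 5)⁻¹ = c3 (0 : Fin 11) 1 4 from by decide] at h
  have m5 : c3 (0 : Fin 11) 1 5 ∈ H := by
    have h := mul_mem (mul_mem a4 m4) (inv_mem a4)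
    rwa [show c3 (4 : Fin 11) 5 6 * c3 (0 : Fin 11) 1 4 * (c3 (4 : Fin 11) 5 6)⁻¹ = c3 (0 : Fin 11) 1 5 from by decide] at h
  have m6 : c3 (0 : Fin 11) 1 6 ∈ H := by
    have h := mul_mem (mul_mem a5 m5) (inv_mem a5)
    rwa [show c3 (5 : Fin 11) 6 7 * c3 (0 : Fin 11) 1 5 * (c3 (5 : Fin 11) 6 7)⁻¹ = c3 (0 : Fin 11) 1 6 from by decide] at h
  have m7 : c3 (0 : Fin 11) 1 7 ∈ H := by
    have h := mul_mem (mul_mem a6 m6) (inv_mem a6)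
    rwa [show c3 (6 : Fin 11) 7 8 * c3 (0 : Fin 11) 1 6 * (c3 (6 : Fin 11) 7 8)⁻¹ = c3 (0 : Fin 11) 1 7 from by decide] at h
  have m8 : c3 (0 : Fin 11) 1 8 ∈ H := by
    have h := mul_mem (mul_mem a7 m7) (inv_mem a7)
    rwa [show c3 (7 : Fin 11) 8 9 * c3 (0 : Fin 11) 1 7 * (c3 (7 : Fin 11) 8 9)⁻¹ = c3 (0 : Fin 11) 1 8 from by decide] at h
  have m9 : c3 (0 : Fin 11) 1 9 ∈ H := by
    have h := mul_mem (mul_mem a8 m8) (inv_mem a8)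
    rwa [show c3 (8 : Fin 11) 9 10 * c3 (0 : Fin 11) 1 8 * (c3 (8 : Fin 11) 9 10)⁻¹ = c3 (0 : Fin 11) 1 9 from by decide] at h
  have m10 : c3 (0 : Fin 11) 1 10 ∈ H := by
    have h := mul_mem (mul_mem a8 m9) (inv_mem a8)
    rwa [show c3 (8 : Fin 11) 9 10 * c3 (0 : Fin 11) 1 9 * (c3 (8 : Fin 11) 9 10)⁻¹ = c3 (0 : Fin 11) 1 10 from by decide] at h
  have hgen : ∀ k : Fin 11, k ≠ 0 → k ≠ 1 → c3 (0 : Fin 11) 1 k ∈ H := by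
    intro k h0 h1
    fin_cases k
    · exact absurd rfl h0
    · exact absurd rfl h1
    · exact m2
    · exact m3
    · exact m4
    · exact m5
    · exact m6
    · exact m7
    · exact m8
    · exact m9
    · exact m10
  apply le_antisymm
  · rw [hHdef, closure_le]
    rintro x (rfl | rfl)
    · exact Equiv.Perm.mem_alternatingGroup.mpr (by decide)
    · exact Equiv.Perm.mem_alternatingGroup.mpr (by decide)
  · rw [← Equiv.Perm.closure_three_cycles_eq_alternating, closure_le]
    intro σ hσ
    obtain ⟨a, b, c, hab, hbc, hac, rfl⟩ := exists_c3 hσ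
    exact c3_mem (show (0 : Fin 11) ≠ 1 from by decide) hgen a b c hab hbc hac

end Eleven

theorem eleven_cycles_generate_A11 :
    let r : Equiv.Perm (Fin 11) :=
      ([0, 1, 2, 3, 4, 5, 6, 7, 8, 9, 10] : List (Fin 11)).formPerm
    let s : Equiv.Perm (Fin 11) :=
      ([0, 1, 2, 3, 4, 5, 6, 7, 8, 10, 9] : List (Fin 11)).formPerm
    Subgroup.closure ({r, s} : Set (Equiv.Perm (Fin 11)))
      = alternatingGroup (Fin 11) := by
  intro r s
  exact Eleven.aux
end

section
/- Let G and H be groups, and suppose the conjugacy class of h in H is of type D, witnessed by s ∈ O_h^H with (hs)² ≠ (sh)² and h, s not conjugate in ⟨h, s⟩. Then for any g ∈ G, the conjugacy class of (g, h) in G × H is of type D. -/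
/-- The conjugacy class of `r` is of type D: there is a conjugate `s` of `r`
with `(rs)² ≠ (sr)²` such that `r` and `s` are not conjugate in `⟨r, s⟩`. -/
def IsTypeD {K : Type*} [Group K] (r : K) : Prop :=
  ∃ s : K, IsConj r s ∧ (r * s) ^ 2 ≠ (s * r) ^ 2 ∧
    ¬ ∃ c ∈ Subgroup.closure ({r, s} : Set K), c * r * c⁻¹ = s

theorem typeD_prod_of_typeD_right {G H : Type*} [Group G] [Group H]
    (h s : H) (hconj : IsConj h s) (hne : (h * s) ^ 2 ≠ (s * h) ^ 2)
    (hnc : ¬ ∃ c ∈ Subgroup.closure ({h, s} : Set H), c * h * c⁻¹ = s)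
    (g : G) :
    IsTypeD ((g, h) : G × H) := by
  refine ⟨(g, s), ?_, ?_, ?_⟩
  · obtain ⟨c, hc⟩ := isConj_iff.mp hconj
    exact isConj_iff.mpr ⟨(1, c), by simp [Prod.ext_iff, hc]⟩
  · simp only [Prod.pow_mk, Prod.mk_mul_mk, ne_eq, Prod.ext_iff, not_and]
    intro _; exact hne
  · rintro ⟨c, hc, hceq⟩
    apply hnc
    refine ⟨c.2, ?_, ?_⟩
    · have : c.2 ∈ Subgroup.map (MonoidHom.snd G H)
          (Subgroup.closure ({(g, h), (g, s)} : Set (G × H))) :=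
        ⟨c, hc, rfl⟩
      rw [MonoidHom.map_closure] at this
      refine Subgroup.closure_mono ?_ this
      rintro x ⟨y, hy, rfl⟩
      rcases hy with rfl | rfl
      · exact Or.inl rfl
      · exact Or.inr rfl
    · exact congrArg Prod.snd hceq
end

section
/- In the alternating group A_n (n ≥ 5), the conjugacy class of a 3-cycle is not of type D: for any two 3-cycles r, s that are conjugate in A_n, either (rs)² = (sr)² or r is conjugate to s in ⟨r, s⟩. -/
open Equiv Equiv.Perm

section SwapLemmas

variable {α : Type*} [DecidableEq α]

/-- overlap-3 inverse case: (p b c) * (p c b) = 1 -/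
private lemma swap_inv_case {p b c : α} (hpb : p ≠ b) (hpc : p ≠ c) (hbc : b ≠ c) :
    (swap p b * swap b c) * (swap p c * swap c b) = 1 := by
  have := hpb.symm; have := hpc.symm; have := hbc.symm
  ext x
  simp only [Equiv.Perm.mul_apply, Equiv.Perm.one_apply]
  by_cases h1 : x = p
  · subst h1; simp [Equiv.swap_apply_of_ne_of_ne, *]
  by_cases h2 : x = b
  · subst h2; simp [Equiv.swap_apply_of_ne_of_ne, *]
  by_cases h3 : x = c
  · subst h3; simp [Equiv.swap_apply_of_ne_of_ne, *]
  · simp [Equiv.swap_apply_of_ne_of_ne, *]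

/-- case A: r = (p b c), s = (p b g): squares of rs and sr agree -/
private lemma swap_case_A {p b c g : α} (hpb : p ≠ b) (hpc : p ≠ c) (hpg : p ≠ g)
    (hbc : b ≠ c) (hbg : b ≠ g) (hcg : c ≠ g) :
    ((swap p b * swap b c) * (swap p b * swap b g)) ^ 2
      = ((swap p b * swap b g) * (swap p b * swap b c)) ^ 2 := by
  have := hpb.symm; have := hpc.symm; have := hpg.symm
  have := hbc.symm; have := hbg.symm; have := hcg.symm
  ext x
  simp only [pow_two, Equiv.Perm.mul_apply]
  by_cases h1 : x = p
  · subst h1; simp [Equiv.swap_apply_of_ne_of_ne, *]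
  by_cases h2 : x = b
  · subst h2; simp [Equiv.swap_apply_of_ne_of_ne, *]
  by_cases h3 : x = c
  · subst h3; simp [Equiv.swap_apply_of_ne_of_ne, *]
  by_cases h4 : x = g
  · subst h4; simp [Equiv.swap_apply_of_ne_of_ne, *]
  · simp [Equiv.swap_apply_of_ne_of_ne, *]

/-- case B: r = (p b c), s = (p c g): r s r = s (r s) -/
private lemma swap_case_B {p b c g : α} (hpb : p ≠ b) (hpc : p ≠ c) (hpg : p ≠ g)
    (hbc : b ≠ c) (hbg : b ≠ g) (hcg : c ≠ g) :
    (swap p b * swap b c) * (swap p c * swap c g) * (swap p b * swap b c)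
      = (swap p c * swap c g) * ((swap p b * swap b c) * (swap p c * swap c g)) := by
  have := hpb.symm; have := hpc.symm; have := hpg.symm
  have := hbc.symm; have := hbg.symm; have := hcg.symm
  ext x
  simp only [Equiv.Perm.mul_apply]
  by_cases h1 : x = p
  · subst h1; simp [Equiv.swap_apply_of_ne_of_ne, *]
  by_cases h2 : x = b
  · subst h2; simp [Equiv.swap_apply_of_ne_of_ne, *]
  by_cases h3 : x = c
  · subst h3; simp [Equiv.swap_apply_of_ne_of_ne, *]
  by_cases h4 : x = g
  · subst h4; simp [Equiv.swap_apply_of_ne_of_ne, *]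
  · simp [Equiv.swap_apply_of_ne_of_ne, *]

/-- case C: r = (p b c), s = (p e b): r s r = s (r s) -/
private lemma swap_case_C {p b c e : α} (hpb : p ≠ b) (hpc : p ≠ c) (hpe : p ≠ e)
    (hbc : b ≠ c) (hbe : b ≠ e) (hce : c ≠ e) :
    (swap p b * swap b c) * (swap p e * swap e b) * (swap p b * swap b c)
      = (swap p e * swap e b) * ((swap p b * swap b c) * (swap p e * swap e b)) := by
  have := hpb.symm; have := hpc.symm; have := hpe.symm
  have := hbc.symm; have := hbe.symm; have := hce.symm
  ext x
  simp only [Equiv.Perm.mul_apply]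
  by_cases h1 : x = p
  · subst h1; simp [Equiv.swap_apply_of_ne_of_ne, *]
  by_cases h2 : x = b
  · subst h2; simp [Equiv.swap_apply_of_ne_of_ne, *]
  by_cases h3 : x = c
  · subst h3; simp [Equiv.swap_apply_of_ne_of_ne, *]
  by_cases h4 : x = e
  · subst h4; simp [Equiv.swap_apply_of_ne_of_ne, *]
  · simp [Equiv.swap_apply_of_ne_of_ne, *]

/-- case D: r = (p b c), s = (p e c): squares of rs and sr agree -/
private lemma swap_case_D {p b c e : α} (hpb : p ≠ b) (hpc : p ≠ c) (hpe : p ≠ e)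
    (hbc : b ≠ c) (hbe : b ≠ e) (hce : c ≠ e) :
    ((swap p b * swap b c) * (swap p e * swap e c)) ^ 2
      = ((swap p e * swap e c) * (swap p b * swap b c)) ^ 2 := by
  have := hpb.symm; have := hpc.symm; have := hpe.symm
  have := hbc.symm; have := hbe.symm; have := hce.symm
  ext x
  simp only [pow_two, Equiv.Perm.mul_apply]
  by_cases h1 : x = p
  · subst h1; simp [Equiv.swap_apply_of_ne_of_ne, *]
  by_cases h2 : x = b
  · subst h2; simp [Equiv.swap_apply_of_ne_of_ne, *]
  by_cases h3 : x = c
  · subst h3; simp [Equiv.swap_apply_of_ne_of_ne, *]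
  by_cases h4 : x = e
  · subst h4; simp [Equiv.swap_apply_of_ne_of_ne, *]
  · simp [Equiv.swap_apply_of_ne_of_ne, *]

/-- case E: r = (p b c), s = (p e g) with 5 distinct points: r s r s r = s (r s r s) -/
private lemma swap_case_E {p b c e g : α} (hpb : p ≠ b) (hpc : p ≠ c) (hpe : p ≠ e)
    (hpg : p ≠ g) (hbc : b ≠ c) (hbe : b ≠ e) (hbg : b ≠ g) (hce : c ≠ e) (hcg : c ≠ g)
    (heg : e ≠ g) :
    (swap p b * swap b c) * (swap p e * swap e g) * (swap p b * swap b c)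
        * (swap p e * swap e g) * (swap p b * swap b c)
      = (swap p e * swap e g) * ((swap p b * swap b c) * (swap p e * swap e g)
          * (swap p b * swap b c) * (swap p e * swap e g)) := by
  have := hpb.symm; have := hpc.symm; have := hpe.symm; have := hpg.symm
  have := hbc.symm; have := hbe.symm; have := hbg.symm
  have := hce.symm; have := hcg.symm; have := heg.symm
  ext x
  simp only [Equiv.Perm.mul_apply]
  by_cases h1 : x = p
  · subst h1; simp [Equiv.swap_apply_of_ne_of_ne, *]
  by_cases h2 : x = b
  · subst h2; simp [Equiv.swap_apply_of_ne_of_ne, *]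
  by_cases h3 : x = c
  · subst h3; simp [Equiv.swap_apply_of_ne_of_ne, *]
  by_cases h4 : x = e
  · subst h4; simp [Equiv.swap_apply_of_ne_of_ne, *]
  by_cases h5 : x = g
  · subst h5; simp [Equiv.swap_apply_of_ne_of_ne, *]
  · simp [Equiv.swap_apply_of_ne_of_ne, *]

end SwapLemmas

/-- Decomposition of a 3-cycle starting at a point of its support. -/
private lemma three_cycle_decomp {α : Type*} [DecidableEq α] [Fintype α]
    {r : Equiv.Perm α} (hr : r.IsThreeCycle) {p : α} (hp : p ∈ r.support) :
    r p ≠ p ∧ r (r p) ≠ r p ∧ r (r p) ≠ p ∧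
      r = swap p (r p) * swap (r p) (r (r p)) := by
  have hb : r p ≠ p := Equiv.Perm.mem_support.mp hp
  have hbmem : r p ∈ r.support := Equiv.Perm.apply_mem_support.mpr hp
  have hc : r (r p) ≠ r p := Equiv.Perm.mem_support.mp hbmem
  have hr3 : r ^ 3 = 1 := by
    rw [← hr.orderOf]; exact pow_orderOf_eq_one r
  have hrrr : r (r (r p)) = p := by
    have := Equiv.ext_iff.mp hr3 p
    simpa [pow_succ, Equiv.Perm.mul_apply] using this
  have hcp : r (r p) ≠ p := by
    intro h
    apply hb
    have := congrArg r h
    rw [hrrr] at this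
    exact this.symm
  refine ⟨hb, hc, hcp, ?_⟩
  have hsub : ({p, r p, r (r p)} : Finset α) ⊆ r.support := by
    intro x hx
    simp only [Finset.mem_insert, Finset.mem_singleton] at hx
    rcases hx with rfl | rfl | rfl
    · exact hp
    · exact hbmem
    · exact Equiv.Perm.apply_mem_support.mpr hbmem
  have hcard : ({p, r p, r (r p)} : Finset α).card = 3 := by
    rw [Finset.card_insert_of_notMem (by simp [hb.symm, hcp.symm]),
      Finset.card_insert_of_notMem (by simp [hc.symm]), Finset.card_singleton]
  have hsupp : ({p, r p, r (r p)} : Finset α) = r.support :=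
    Finset.eq_of_subset_of_card_le hsub (by rw [hr.card_support, hcard])
  have hb' := hb.symm; have hc' := hc.symm; have hcp' := hcp.symm
  ext x
  simp only [Equiv.Perm.mul_apply]
  by_cases h1 : x = p
  · subst h1; simp [Equiv.swap_apply_of_ne_of_ne, *]
  by_cases h2 : x = r p
  · subst h2; simp [Equiv.swap_apply_of_ne_of_ne, *]
  by_cases h3 : x = r (r p)
  · subst h3; simp [Equiv.swap_apply_of_ne_of_ne, hrrr, *]
  · have hxs : x ∉ r.support := by
      rw [← hsupp]; simp [h1, h2, h3]
    rw [Equiv.Perm.notMem_support.mp hxs,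
      Equiv.swap_apply_of_ne_of_ne h2 h3, Equiv.swap_apply_of_ne_of_ne h1 h2]

theorem three_cycles_not_typeD (n : ℕ) (hn : 5 ≤ n)
    (r s : Equiv.Perm (Fin n))
    (hr : r.IsThreeCycle) (hs : s.IsThreeCycle)
    (hconj : ∃ c ∈ alternatingGroup (Fin n), c * r * c⁻¹ = s) :
    (r * s) ^ 2 = (s * r) ^ 2 ∨
      ∃ c ∈ Subgroup.closure ({r, s} : Set (Equiv.Perm (Fin n))),
        c * r * c⁻¹ = s := by
  clear hconj hn
  by_cases hd : _root_.Disjoint r.support s.support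
  · left
    have hcomm : Commute r s :=
      (Equiv.Perm.disjoint_iff_disjoint_support.mpr hd).commute
    rw [hcomm.eq]
  · obtain ⟨p, hpr, hps⟩ := Finset.not_disjoint_iff.mp hd
    obtain ⟨hb, hcb, hcp, heqr⟩ := three_cycle_decomp hr hpr
    obtain ⟨he, hge, hgp, heqs⟩ := three_cycle_decomp hs hps
    set b := r p with hbdef
    set c := r (r p) with hcdef
    set e := s p with hedef
    set g := s (s p) with hgdef
    have hrmem : r ∈ Subgroup.closure ({r, s} : Set (Equiv.Perm (Fin n))) :=
      Subgroup.subset_closure (Set.mem_insert _ _)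
    have hsmem : s ∈ Subgroup.closure ({r, s} : Set (Equiv.Perm (Fin n))) :=
      Subgroup.subset_closure (Set.mem_insert_of_mem _ rfl)
    by_cases heb : e = b
    · by_cases hgc : g = c
      · -- s = r
        right
        refine ⟨1, one_mem _, ?_⟩
        have : s = r := by rw [heqs, heqr, heb, hgc]
        simp [this]
      · -- case A : s = (p b g)
        left
        rw [heqr, heqs, heb]
        exact swap_case_A hb.symm hcp.symm hgp.symm hcb.symm
          (heb ▸ hge).symm (fun h => hgc h.symm)
    · by_cases hec : e = c
      · by_cases hgb : g = b
        · -- s = r⁻¹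
          left
          have h1 : r * s = 1 := by
            rw [heqr, heqs, hec, hgb]
            exact swap_inv_case hb.symm hcp.symm hcb.symm
          have h2 : s = r⁻¹ := eq_inv_of_mul_eq_one_right h1
          have h3 : s * r = 1 := by rw [h2]; group
          rw [h1, h3]
        · -- case B : s = (p c g)
          right
          refine ⟨r * s, mul_mem hrmem hsmem, ?_⟩
          rw [mul_inv_eq_iff_eq_mul]
          rw [heqr, heqs, hec]
          exact swap_case_B hb.symm hcp.symm hgp.symm hcb.symm
            (fun h => hgb h.symm) (hec ▸ hge).symm
      · -- e ∉ {p, b, c}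
        by_cases hgb : g = b
        · -- case C : s = (p e b)
          right
          refine ⟨r * s, mul_mem hrmem hsmem, ?_⟩
          rw [mul_inv_eq_iff_eq_mul]
          rw [heqr, heqs, hgb]
          exact swap_case_C hb.symm hcp.symm he.symm hcb.symm
            (fun h => heb h.symm) (fun h => hec h.symm)
        · by_cases hgc : g = c
          · -- case D : s = (p e c)
            left
            rw [heqr, heqs, hgc]
            exact swap_case_D hb.symm hcp.symm he.symm hcb.symm
              (fun h => heb h.symm) (fun h => hec h.symm)
          · -- case E : s = (p e g), 5 points
            right
            refine ⟨r * s * r * s, mul_mem (mul_mem (mul_mem hrmem hsmem) hrmem) hsmem, ?_⟩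
            rw [mul_inv_eq_iff_eq_mul]
            rw [heqr, heqs]
            exact swap_case_E hb.symm hcp.symm he.symm hgp.symm hcb.symm
              (fun h => heb h.symm) (fun h => hgb h.symm)
              (fun h => hec h.symm) (fun h => hgc h.symm) hge.symm
end

section
/- Let G = H × K be a direct product of groups and (h, k) ∈ G. If the conjugacy class of h in H is of type D, then the conjugacy class of (h, k) in G is of type D, witnessed by (h', k) where h' is the witness for h. -/
theorem typeD_witness_in_product {H K : Type*} [Group H] [Group K]
    (h h' : H) (k : K)
    (hconj : IsConj h h') (hne : (h * h') ^ 2 ≠ (h' * h) ^ 2)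
    (hnc : ¬ ∃ c ∈ Subgroup.closure ({h, h'} : Set H), c * h * c⁻¹ = h') :
    IsConj ((h, k) : H × K) (h', k) ∧
      ((h, k) * (h', k)) ^ 2 ≠ ((h', k) * (h, k)) ^ 2 ∧
      ¬ ∃ c ∈ Subgroup.closure ({(h, k), (h', k)} : Set (H × K)),
          c * (h, k) * c⁻¹ = (h', k) := by
  obtain ⟨c, hc⟩ := hconj
  refine ⟨⟨⟨(c, 1), (c⁻¹, 1), by simp, by simp⟩, ?_⟩, ?_, ?_⟩
  · have := hc
    simp only [SemiconjBy] at this ⊢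
    ext <;> simp [this]
  · intro hcontra
    apply hne
    have := congrArg Prod.fst hcontra
    simpa using this
  · rintro ⟨d, hd, hdeq⟩
    apply hnc
    refine ⟨d.1, ?_, ?_⟩
    · have : d.1 ∈ Subgroup.map (MonoidHom.fst H K) (Subgroup.closure {(h, k), (h', k)}) :=
        ⟨d, hd, rfl⟩
      rw [MonoidHom.map_closure] at this
      simpa [Set.image_insert_eq] using this
    · have := congrArg Prod.fst hdeq
      simpa using this
end
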